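/- Let n ≥ 1 and r ≥ 1 be integers and let m₁, …, m_r be positive integers with c₁ = ∑_{u=1}^r m_u < 2r. Let i be an integer with 0 ≤ i ≤ c₁ − r and i ≤ n. Then in the quotient ring R = ℤ[h, ξ] / (h^{n+1}, ∏_{u=1}^r (ξ − m_u·h)), the following identity holds: ∏_{u=1}^r (ξ − m_u·h)^{m_u−1} · h^{n−i} · ξ^{2r−c₁−1+i} = T_i · h^n · ξ^{r−1}, where T_i = ∑_{j=0}^i h_{i−j}(m₁,…,m_r) · ( ∑_{(j₁,…,j_r) ∈ ℕ^r, j₁+⋯+j_r = j} ∏_{u=1}^r C(m_u−1, j_u)·(−m_u)^{j_u} ). -/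

import Mathlib

open MvPolynomial

/-- The complete homogeneous symmetric polynomial of degree `i` evaluated at
`(m 0, …, m (r-1))`:  `h_i(m) = ∑_{j₁+⋯+j_r = i} ∏_u m_u^{j_u}`. -/
def completeHom (r : ℕ) (m : Fin r → ℕ) (i : ℕ) : ℤ :=
  ∑ j ∈ Finset.Nat.antidiagonalTuple r i, ∏ u, (m u : ℤ) ^ j u

/-- `E_j = ∑_{j₁+⋯+j_r = j} ∏_{u=1}^r C(m_u−1, j_u)·(−m_u)^{j_u}`. -/
def Ecoeff (r : ℕ) (m : Fin r → ℕ) (j : ℕ) : ℤ :=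
  ∑ jv ∈ Finset.Nat.antidiagonalTuple r j,
    ∏ u, ((m u - 1).choose (jv u) : ℤ) * (-(m u : ℤ)) ^ jv u

/-- `T_i = ∑_{j=0}^i h_{i−j}(m₁,…,m_r)·E_j`. -/
def Tcoeff (r : ℕ) (m : Fin r → ℕ) (i : ℕ) : ℤ :=
  ∑ j ∈ Finset.range (i + 1), completeHom r m (i - j) * Ecoeff r m j

lemma geom (c : ℤ) :
    (1 - PowerSeries.C c * PowerSeries.X) * PowerSeries.mk (fun k => c ^ k) = 1 := by
  ext d
  rw [sub_mul, one_mul, mul_assoc]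
  cases d with
  | zero => simp
  | succ d =>
    rw [map_sub, PowerSeries.coeff_C_mul, PowerSeries.coeff_succ_X_mul]
    simp [pow_succ, mul_comm]

lemma hsum_gen (r : ℕ) (m : Fin r → ℕ) :
    PowerSeries.mk (fun d => completeHom r m d)
      = ∏ u : Fin r, PowerSeries.mk (fun k => ((m u : ℤ)) ^ k) := by
  ext d
  rw [PowerSeries.coeff_prod, PowerSeries.coeff_mk]
  unfold completeHom
  refine Finset.sum_nbij' (i := fun x => Finsupp.equivFunOnFinite.symm x)
    (j := fun l => ⇑l) ?_ ?_ ?_ ?_ ?_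
  · intro x hx
    rw [Finset.mem_finsuppAntidiag]
    exact ⟨by simpa using (Finset.Nat.mem_antidiagonalTuple.mp hx), Finset.subset_univ _⟩
  · intro l hl
    rw [Finset.Nat.mem_antidiagonalTuple]
    rw [Finset.mem_finsuppAntidiag] at hl
    simpa using hl.1
  · intro x _
    rfl
  · intro l _
    exact Finsupp.equivFunOnFinite.symm_apply_apply l
  · intro x _
    simp [Finsupp.equivFunOnFinite]
    rfl

lemma prod_one_sub (r : ℕ) (m : Fin r → ℕ) :
    ∏ u : Fin r, (1 - PowerSeries.C (m u : ℤ) * PowerSeries.X)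
      = ∑ S ∈ (Finset.univ : Finset (Fin r)).powerset,
          PowerSeries.C (∏ u ∈ S, -(m u : ℤ)) * PowerSeries.X ^ S.card := by
  have : ∀ u : Fin r, (1 - PowerSeries.C (m u : ℤ) * PowerSeries.X)
      = (-(PowerSeries.C (m u : ℤ)) * PowerSeries.X + 1) := by
    intro u; ring
  simp only [this]
  rw [Finset.prod_add]
  refine Finset.sum_congr rfl fun S _ => ?_
  rw [Finset.prod_const, one_pow, mul_one]
  rw [Finset.prod_mul_distrib, Finset.prod_const]
  congr 1
  rw [Finset.prod_congr rfl fun u (_ : u ∈ S) => (map_neg (PowerSeries.C (R := ℤ)) ((m u : ℤ))).symm,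
    ← map_prod]

lemma coeff_prod_one_sub (r : ℕ) (m : Fin r → ℕ) (a : ℕ) :
    PowerSeries.coeff a (∏ u : Fin r, (1 - PowerSeries.C (m u : ℤ) * PowerSeries.X))
      = ∑ S ∈ (Finset.univ : Finset (Fin r)).powerset,
          (if S.card = a then ∏ u ∈ S, -(m u : ℤ) else 0) := by
  rw [prod_one_sub, map_sum]
  refine Finset.sum_congr rfl fun S _ => ?_
  rw [PowerSeries.coeff_C_mul, PowerSeries.coeff_X_pow]
  by_cases h : a = S.card
  · simp [h]
  · simp [h, Ne.symm h]

lemma IdE (r : ℕ) (m : Fin r → ℕ) (K : ℕ) (hK : 1 ≤ K) :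
    ∑ S ∈ (Finset.univ : Finset (Fin r)).powerset,
      (∏ u ∈ S, -(m u : ℤ)) *
        (if S.card ≤ K then completeHom r m (K - S.card) else 0) = 0 := by
  have hfg : (∏ u : Fin r, (1 - PowerSeries.C (m u : ℤ) * PowerSeries.X)) *
      PowerSeries.mk (fun d => completeHom r m d) = 1 := by
    rw [hsum_gen, ← Finset.prod_mul_distrib]
    rw [Finset.prod_congr rfl fun u _ => geom (m u : ℤ)]
    exact Finset.prod_const_one
  have h0 : PowerSeries.coeff K ((∏ u : Fin r, (1 - PowerSeries.C (m u : ℤ) * PowerSeries.X)) *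
      PowerSeries.mk (fun d => completeHom r m d)) = 0 := by
    rw [hfg, PowerSeries.coeff_one, if_neg (by omega)]
  rw [PowerSeries.coeff_mul,
    Finset.Nat.sum_antidiagonal_eq_sum_range_succ
    (fun a b => (PowerSeries.coeff a (∏ u : Fin r, (1 - PowerSeries.C (m u : ℤ) * PowerSeries.X))) * PowerSeries.coeff b (PowerSeries.mk fun d => completeHom r m d))] at h0
  simp only [coeff_prod_one_sub, PowerSeries.coeff_mk, Finset.sum_mul] at h0
  rw [Finset.sum_comm] at h0
  refine Eq.trans ?_ h0
  refine Finset.sum_congr rfl fun S _ => ?_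
  have hcard : S.card ≤ r := by simpa using Finset.card_le_card (Finset.subset_univ S)
  by_cases h : S.card ≤ K
  · rw [if_pos h]
    have heq : (∑ x ∈ Finset.range K.succ,
        (if S.card = x then ∏ u ∈ S, -(m u : ℤ) else 0) * completeHom r m (K - x))
        = (∏ u ∈ S, -(m u : ℤ)) * completeHom r m (K - S.card) := by
      rw [Finset.sum_eq_single S.card]
      · rw [if_pos rfl]
      · intro b _ hb; rw [if_neg (Ne.symm hb), zero_mul]
      · intro hb; exact absurd (Finset.mem_range.mpr (by omega)) hb
    rw [heq]
  · rw [if_neg h, mul_zero]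
    refine (Finset.sum_eq_zero fun b hb => ?_).symm
    rw [Finset.mem_range] at hb
    rw [if_neg (by omega), zero_mul]

lemma completeHom_zero (r : ℕ) (m : Fin r → ℕ) : completeHom r m 0 = 1 := by
  unfold completeHom
  rw [Finset.Nat.antidiagonalTuple_zero_right]
  simp

/-- expansion of the defining product -/
lemma Pexp (r : ℕ) (m : Fin r → ℕ) :
    (∏ u : Fin r, (X 1 - C (m u : ℤ) * X 0) : MvPolynomial (Fin 2) ℤ)
      = ∑ S ∈ (Finset.univ : Finset (Fin r)).powerset,
          C (∏ u ∈ S, -(m u : ℤ)) * (X 0 ^ S.card * X 1 ^ (r - S.card)) := by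
  have h1 : ∀ u : Fin r, (X 1 - C (m u : ℤ) * X 0 : MvPolynomial (Fin 2) ℤ)
      = (C (-(m u : ℤ)) * X 0) + X 1 := by
    intro u; rw [map_neg]; ring
  simp only [h1]
  rw [Finset.prod_add]
  refine Finset.sum_congr rfl fun S hS => ?_
  rw [Finset.prod_const, Finset.card_sdiff_of_subset (Finset.mem_powerset.mp hS), Finset.card_univ,
    Fintype.card_fin, Finset.prod_mul_distrib, Finset.prod_const, ← map_prod]
  ring

set_option maxHeartbeats 1000000 in
lemma lemB (n r : ℕ) (hr : 1 ≤ r) (m : Fin r → ℕ) (k : ℕ) (hk : k ≤ n) :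
    Ideal.Quotient.mk
        (Ideal.span {(X 0 : MvPolynomial (Fin 2) ℤ) ^ (n + 1),
          ∏ u, (X 1 - MvPolynomial.C (m u : ℤ) * X 0)})
        (X 0 ^ (n - k) * X 1 ^ (r - 1 + k))
      = Ideal.Quotient.mk _
          (C (completeHom r m k) * (X 0 ^ n * X 1 ^ (r - 1))) := by
  induction k using Nat.strong_induction_on with
  | _ k IH =>
  set I : Ideal (MvPolynomial (Fin 2) ℤ) :=
    Ideal.span {(X 0 : MvPolynomial (Fin 2) ℤ) ^ (n + 1),
      ∏ u, (X 1 - MvPolynomial.C (m u : ℤ) * X 0)} with hI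
  set mkq := Ideal.Quotient.mk I with hmkq
  have hh : mkq (X 0 ^ (n + 1)) = 0 :=
    Ideal.Quotient.eq_zero_iff_mem.mpr (Ideal.subset_span (by simp))
  have hP : mkq (∏ u, (X 1 - MvPolynomial.C (m u : ℤ) * X 0)) = 0 :=
    Ideal.Quotient.eq_zero_iff_mem.mpr (Ideal.subset_span (by simp))
  match k, hk, IH with
  | 0, hk, IH => rw [completeHom_zero, map_one, one_mul, Nat.sub_zero, Nat.add_zero]
  | (k+1), hk, IH =>
  -- step 1: 0 = sum over subsets
  have h2 : (0 : MvPolynomial (Fin 2) ℤ ⧸ I)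
      = ∑ S ∈ (Finset.univ : Finset (Fin r)).powerset,
          mkq (C (∏ u ∈ S, -(m u : ℤ)) *
            (X 0 ^ (n - k - 1 + S.card) * X 1 ^ (k + (r - S.card)))) := by
    have : mkq ((X 0 ^ (n - k - 1) * X 1 ^ k) * ∏ u, (X 1 - MvPolynomial.C (m u : ℤ) * X 0))
        = 0 := by rw [map_mul, hP, mul_zero]
    rw [← this, Pexp, Finset.mul_sum, map_sum]
    refine Finset.sum_congr rfl fun S hS => ?_
    congr 1
    rw [pow_add, pow_add]
    ring
  -- step 2: isolate the empty set
  rw [Finset.sum_eq_add_sum_sdiff_singleton_of_mem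
    (Finset.mem_powerset.mpr (Finset.empty_subset _)) ] at h2
  simp only [Finset.prod_empty, map_one, one_mul, Finset.card_empty, Nat.add_zero,
    Nat.sub_zero] at h2
  -- the empty-set term is the LHS of the goal
  have hexp0 : n - (k + 1) = n - k - 1 := by omega
  have hexp1 : r - 1 + (k + 1) = k + r := by omega
  rw [hexp0, hexp1]
  have hiso : mkq (X 0 ^ (n - k - 1) * X 1 ^ (k + r))
      = - ∑ S ∈ (Finset.univ : Finset (Fin r)).powerset \ {∅},
          mkq (C (∏ u ∈ S, -(m u : ℤ)) *
            (X 0 ^ (n - k - 1 + S.card) * X 1 ^ (k + (r - S.card)))) := by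
    rw [eq_neg_iff_add_eq_zero]
    rw [← h2]
  rw [hiso]
  -- step 3: evaluate each term
  have hterm : ∀ S ∈ (Finset.univ : Finset (Fin r)).powerset \ {∅},
      mkq (C (∏ u ∈ S, -(m u : ℤ)) *
        (X 0 ^ (n - k - 1 + S.card) * X 1 ^ (k + (r - S.card))))
      = mkq (C ((∏ u ∈ S, -(m u : ℤ)) *
          (if S.card ≤ k + 1 then completeHom r m (k + 1 - S.card) else 0)))
        * mkq (X 0 ^ n * X 1 ^ (r - 1)) := by
    intro S hS
    rw [Finset.mem_sdiff, Finset.mem_singleton] at hS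
    have hcard : S.card ≤ r := by
      simpa using Finset.card_le_card (Finset.mem_powerset.mp hS.1)
    have hcard1 : 1 ≤ S.card := Finset.card_pos.mpr (Finset.nonempty_iff_ne_empty.mpr hS.2)
    by_cases hsk : S.card ≤ k + 1
    · rw [if_pos hsk]
      have e0 : n - k - 1 + S.card = n - (k + 1 - S.card) := by omega
      have e1 : k + (r - S.card) = r - 1 + (k + 1 - S.card) := by omega
      rw [e0, e1, map_mul, IH (k + 1 - S.card) (by omega) (by omega)]
      simp only [map_mul]
      ring
    · rw [if_neg hsk, mul_zero, map_zero, map_zero, zero_mul]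
      have e0 : n - k - 1 + S.card = (n + 1) + (S.card - k - 2) := by omega
      have hz : mkq (X 0 ^ (n - k - 1 + S.card) * X 1 ^ (k + (r - S.card))) = 0 := by
        rw [e0, pow_add, mul_assoc, map_mul, hh, zero_mul]
      rw [map_mul, hz, mul_zero]
  rw [Finset.sum_congr rfl hterm, ← Finset.sum_mul, ← map_sum]
  have hC : (∑ S ∈ (Finset.univ : Finset (Fin r)).powerset \ {∅},
      C ((∏ u ∈ S, -(m u : ℤ)) *
        (if S.card ≤ k + 1 then completeHom r m (k + 1 - S.card) else 0))
      : MvPolynomial (Fin 2) ℤ) = C (∑ S ∈ (Finset.univ : Finset (Fin r)).powerset \ {∅},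
      ((∏ u ∈ S, -(m u : ℤ)) *
        (if S.card ≤ k + 1 then completeHom r m (k + 1 - S.card) else 0))) := by rw [map_sum]
  -- step 4: the scalar identity
  have hscal : ∑ S ∈ (Finset.univ : Finset (Fin r)).powerset \ {∅},
      ((∏ u ∈ S, -(m u : ℤ)) *
        (if S.card ≤ k + 1 then completeHom r m (k + 1 - S.card) else 0))
      = - completeHom r m (k + 1) := by
    have := IdE r m (k + 1) (by omega)
    rw [Finset.sum_eq_add_sum_sdiff_singleton_of_mem
      (Finset.mem_powerset.mpr (Finset.empty_subset _))] at this
    simp only [Finset.prod_empty, Finset.card_empty, one_mul, Nat.sub_zero,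
      if_pos (by omega : (0:ℕ) ≤ k + 1), Nat.zero_le, ite_true] at this
    linarith [this]
  rw [hC, hscal, map_neg, map_neg]
  simp only [map_mul]
  ring

lemma Ecoeff_eq (r : ℕ) (m : Fin r → ℕ) (hm : ∀ u, 0 < m u) (j : ℕ) :
    Ecoeff r m j = ∑ jv ∈ (Fintype.piFinset (fun u => Finset.range (m u))).filter
        (fun jv => ∑ u, jv u = j),
      ∏ u, ((m u - 1).choose (jv u) : ℤ) * (-(m u : ℤ)) ^ jv u := by
  unfold Ecoeff
  refine (Finset.sum_subset ?_ ?_).symm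
  · intro jv hjv
    rw [Finset.mem_filter] at hjv
    exact Finset.Nat.mem_antidiagonalTuple.mpr hjv.2
  · intro jv hjv hnot
    have hsum := Finset.Nat.mem_antidiagonalTuple.mp hjv
    rw [Finset.mem_filter] at hnot
    have : ¬ jv ∈ Fintype.piFinset (fun u => Finset.range (m u)) := fun h => hnot ⟨h, hsum⟩
    rw [Fintype.mem_piFinset] at this
    push_neg at this
    obtain ⟨u, hu⟩ := this
    rw [Finset.mem_range, not_lt] at hu
    refine Finset.prod_eq_zero (Finset.mem_univ u) ?_
    have hmu := hm u
    have : (m u - 1).choose (jv u) = 0 := Nat.choose_eq_zero_of_lt (by omega)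
    rw [this]
    simp

lemma scalar_sum (r : ℕ) (m : Fin r → ℕ) (hm : ∀ u, 0 < m u) (c₁ : ℕ)
    (hc₁ : c₁ = ∑ u, m u) (i : ℕ) (hi : i + r ≤ c₁) :
    ∑ jv ∈ Fintype.piFinset (fun u => Finset.range (m u)),
      (∏ u, ((m u - 1).choose (jv u) : ℤ) * (-(m u : ℤ)) ^ jv u) *
        (if (∑ u, jv u) ≤ i then completeHom r m (i - ∑ u, jv u) else 0)
      = Tcoeff r m i := by
  have hsum_le : ∀ jv ∈ Fintype.piFinset (fun u => Finset.range (m u)),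
      (∑ u, jv u) ∈ Finset.range (c₁ - r + 1) := by
    intro jv hjv
    rw [Fintype.mem_piFinset] at hjv
    have h1 : ∑ u, (jv u + 1) ≤ ∑ u, m u := by
      refine Finset.sum_le_sum fun u _ => ?_
      have := hjv u
      rw [Finset.mem_range] at this
      omega
    rw [Finset.sum_add_distrib, Finset.sum_const, Finset.card_univ, Fintype.card_fin,
      smul_eq_mul, mul_one] at h1
    rw [Finset.mem_range]
    omega
  rw [← Finset.sum_fiberwise_of_maps_to hsum_le]
  have hinner : ∀ j ∈ Finset.range (c₁ - r + 1),
      (∑ jv ∈ (Fintype.piFinset (fun u => Finset.range (m u))).filter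
          (fun jv => ∑ u, jv u = j),
        (∏ u, ((m u - 1).choose (jv u) : ℤ) * (-(m u : ℤ)) ^ jv u) *
          (if (∑ u, jv u) ≤ i then completeHom r m (i - ∑ u, jv u) else 0))
      = (if j ≤ i then completeHom r m (i - j) else 0) * Ecoeff r m j := by
    intro j _
    rw [Ecoeff_eq r m hm j, Finset.mul_sum]
    refine Finset.sum_congr rfl fun jv hjv => ?_
    rw [(Finset.mem_filter.mp hjv).2, mul_comm]
  rw [Finset.sum_congr rfl hinner]
  unfold Tcoeff
  have hsub : Finset.range (i + 1) ⊆ Finset.range (c₁ - r + 1) :=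
    Finset.range_subset_range.mpr (by omega)
  rw [← Finset.sum_subset hsub (fun j _ hj => by
    rw [Finset.mem_range, not_lt] at hj
    rw [if_neg (by omega), zero_mul])]
  refine Finset.sum_congr rfl fun j hj => ?_
  rw [Finset.mem_range] at hj
  rw [if_pos (by omega)]

set_option maxHeartbeats 1000000 in
set_option synthInstance.maxHeartbeats 400000 in
/-- Equation (5.16)'s right-hand side, computed in the proof of Proposition 5.14:
in the cohomology ring `R = ℤ[h, ξ]/(h^{n+1}, ∏_u (ξ − m_u h))` of
`ℙ(⊕_{u=1}^r O_{ℙⁿ}(m_u))` (with `h = X 0`, `ξ = X 1`), for `0 ≤ i ≤ c₁ − r`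
and `i ≤ n`, one has
`∏_u (ξ − m_u h)^{m_u−1} · h^{n−i} · ξ^{2r−c₁−1+i} = T_i · h^n · ξ^{r−1}`. -/
theorem classical_intersection_eval
    (n r : ℕ) (hn : 1 ≤ n) (hr : 1 ≤ r) (m : Fin r → ℕ) (hm : ∀ u, 0 < m u)
    (c₁ : ℕ) (hc₁ : c₁ = ∑ u, m u) (hlt : c₁ < 2 * r)
    (i : ℕ) (hi : i + r ≤ c₁) (hin : i ≤ n) :
    Ideal.Quotient.mk
        (Ideal.span {(X 0 : MvPolynomial (Fin 2) ℤ) ^ (n + 1),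
          ∏ u, (X 1 - MvPolynomial.C (m u : ℤ) * X 0)})
        ((∏ u, (X 1 - MvPolynomial.C (m u : ℤ) * X 0) ^ (m u - 1)) *
          X 0 ^ (n - i) * X 1 ^ (2 * r - c₁ - 1 + i))
      = Ideal.Quotient.mk
          (Ideal.span {(X 0 : MvPolynomial (Fin 2) ℤ) ^ (n + 1),
            ∏ u, (X 1 - MvPolynomial.C (m u : ℤ) * X 0)})
          (MvPolynomial.C (Tcoeff r m i) * X 0 ^ n * X 1 ^ (r - 1)) := by
  have hh : Ideal.Quotient.mk
      (Ideal.span {(X 0 : MvPolynomial (Fin 2) ℤ) ^ (n + 1),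
        ∏ u, (X 1 - MvPolynomial.C (m u : ℤ) * X 0)}) (X 0 ^ (n + 1)) = 0 :=
    Ideal.Quotient.eq_zero_iff_mem.mpr (Ideal.subset_span (by simp))
  -- expand each factor
  have hfac : ∀ u : Fin r, ((X 1 - MvPolynomial.C (m u : ℤ) * X 0) ^ (m u - 1)
      : MvPolynomial (Fin 2) ℤ)
      = ∑ k ∈ Finset.range (m u),
          C (((m u - 1).choose k : ℤ) * (-(m u : ℤ)) ^ k) *
            (X 0 ^ k * X 1 ^ (m u - 1 - k)) := by
    intro u
    have h1 : (X 1 - MvPolynomial.C (m u : ℤ) * X 0 : MvPolynomial (Fin 2) ℤ)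
        = (C (-(m u : ℤ)) * X 0) + X 1 := by rw [map_neg]; ring
    rw [h1, add_pow]
    rw [show m u - 1 + 1 = m u by have := hm u; omega]
    refine Finset.sum_congr rfl fun k _ => ?_
    rw [mul_pow, ← map_pow, map_mul, map_natCast]
    push_cast
    ring
  -- expand the product
  have hprod : ((∏ u, (X 1 - MvPolynomial.C (m u : ℤ) * X 0) ^ (m u - 1))
      : MvPolynomial (Fin 2) ℤ)
      = ∑ jv ∈ Fintype.piFinset (fun u => Finset.range (m u)),
          C (∏ u, ((m u - 1).choose (jv u) : ℤ) * (-(m u : ℤ)) ^ jv u) *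
            (X 0 ^ (∑ u, jv u) * X 1 ^ (∑ u, (m u - 1 - jv u))) := by
    rw [Finset.prod_congr rfl fun u _ => hfac u, Finset.prod_univ_sum]
    refine Finset.sum_congr rfl fun jv _ => ?_
    rw [Finset.prod_mul_distrib, Finset.prod_mul_distrib, ← map_prod,
      Finset.prod_pow_eq_pow_sum, Finset.prod_pow_eq_pow_sum]
  -- main computation
  rw [hprod, Finset.sum_mul, Finset.sum_mul, map_sum]
  have hterm : ∀ jv ∈ Fintype.piFinset (fun u => Finset.range (m u)),
      Ideal.Quotient.mk
        (Ideal.span {(X 0 : MvPolynomial (Fin 2) ℤ) ^ (n + 1),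
          ∏ u, (X 1 - MvPolynomial.C (m u : ℤ) * X 0)})
        (C (∏ u, ((m u - 1).choose (jv u) : ℤ) * (-(m u : ℤ)) ^ jv u) *
            (X 0 ^ (∑ u, jv u) * X 1 ^ (∑ u, (m u - 1 - jv u))) *
            X 0 ^ (n - i) * X 1 ^ (2 * r - c₁ - 1 + i))
        = Ideal.Quotient.mk
        (Ideal.span {(X 0 : MvPolynomial (Fin 2) ℤ) ^ (n + 1),
          ∏ u, (X 1 - MvPolynomial.C (m u : ℤ) * X 0)})
          (C ((∏ u, ((m u - 1).choose (jv u) : ℤ) * (-(m u : ℤ)) ^ jv u) *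
            (if (∑ u, jv u) ≤ i then completeHom r m (i - ∑ u, jv u) else 0)) *
            (X 0 ^ n * X 1 ^ (r - 1))) := by
    intro jv hjv
    rw [Fintype.mem_piFinset] at hjv
    -- the complementary exponent sum
    have hcsum : (∑ u, (m u - 1 - jv u)) + ((∑ u, jv u) + r) = c₁ := by
      have h1 : ∀ u : Fin r, (m u - 1 - jv u) + (jv u + 1) = m u := by
        intro u
        have h2 := hjv u
        rw [Finset.mem_range] at h2
        omega
      have h3 : ∑ u, ((m u - 1 - jv u) + (jv u + 1)) = c₁ := by
        rw [Finset.sum_congr rfl fun u _ => h1 u, hc₁]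
      rw [Finset.sum_add_distrib, Finset.sum_add_distrib, Finset.sum_const,
        Finset.card_univ, Fintype.card_fin, smul_eq_mul, mul_one] at h3
      omega
    have hrc : r ≤ c₁ := by omega
    by_cases hji : (∑ u, jv u) ≤ i
    · -- exponent arithmetic
      have e0 : (∑ u, jv u) + (n - i) = n - (i - ∑ u, jv u) := by omega
      have e1 : (∑ u, (m u - 1 - jv u)) + (2 * r - c₁ - 1 + i)
          = r - 1 + (i - ∑ u, jv u) := by omega
      have hform : (C (∏ u, ((m u - 1).choose (jv u) : ℤ) * (-(m u : ℤ)) ^ jv u) *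
            (X 0 ^ (∑ u, jv u) * X 1 ^ (∑ u, (m u - 1 - jv u))) *
            X 0 ^ (n - i) * X 1 ^ (2 * r - c₁ - 1 + i) : MvPolynomial (Fin 2) ℤ)
          = C (∏ u, ((m u - 1).choose (jv u) : ℤ) * (-(m u : ℤ)) ^ jv u) *
            (X 0 ^ ((∑ u, jv u) + (n - i)) *
             X 1 ^ ((∑ u, (m u - 1 - jv u)) + (2 * r - c₁ - 1 + i))) := by
        rw [pow_add, pow_add]
        ring
      rw [hform]
      simp only [e0, e1]
      rw [map_mul, lemB n r hr m (i - ∑ u, jv u) (by omega), if_pos hji]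
      simp only [map_mul]
      ring
    · -- dies on h^{n+1}
      have e0 : (∑ u, jv u) + (n - i) = (n + 1) + ((∑ u, jv u) - i - 1) := by omega
      have hform1 : (C (∏ u, ((m u - 1).choose (jv u) : ℤ) * (-(m u : ℤ)) ^ jv u) *
            (X 0 ^ (∑ u, jv u) * X 1 ^ (∑ u, (m u - 1 - jv u))) *
            X 0 ^ (n - i) * X 1 ^ (2 * r - c₁ - 1 + i) : MvPolynomial (Fin 2) ℤ)
          = C (∏ u, ((m u - 1).choose (jv u) : ℤ) * (-(m u : ℤ)) ^ jv u) *
            (X 0 ^ ((∑ u, jv u) + (n - i)) *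
             X 1 ^ ((∑ u, (m u - 1 - jv u)) + (2 * r - c₁ - 1 + i))) := by
        rw [pow_add, pow_add]
        ring
      rw [hform1]
      simp only [e0]
      rw [pow_add (X 0 : MvPolynomial (Fin 2) ℤ) (n + 1) ((∑ u, jv u) - i - 1),
        if_neg hji, mul_zero, map_zero, zero_mul, map_zero]
      have hmem : ((X 0 : MvPolynomial (Fin 2) ℤ) ^ (n + 1)) ∈
          Ideal.span {(X 0 : MvPolynomial (Fin 2) ℤ) ^ (n + 1),
            ∏ u, (X 1 - MvPolynomial.C (m u : ℤ) * X 0)} :=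
        Ideal.subset_span (by simp)
      exact Ideal.Quotient.eq_zero_iff_mem.mpr
        (Ideal.mul_mem_left _ _ (Ideal.mul_mem_right _ _ (Ideal.mul_mem_right _ _ hmem)))
  rw [Finset.sum_congr rfl hterm, ← map_sum]
  have hC : (∑ jv ∈ Fintype.piFinset (fun u => Finset.range (m u)),
      C ((∏ u, ((m u - 1).choose (jv u) : ℤ) * (-(m u : ℤ)) ^ jv u) *
        (if (∑ u, jv u) ≤ i then completeHom r m (i - ∑ u, jv u) else 0)) *
        (X 0 ^ n * X 1 ^ (r - 1)) : MvPolynomial (Fin 2) ℤ)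
      = C (∑ jv ∈ Fintype.piFinset (fun u => Finset.range (m u)),
        ((∏ u, ((m u - 1).choose (jv u) : ℤ) * (-(m u : ℤ)) ^ jv u) *
        (if (∑ u, jv u) ≤ i then completeHom r m (i - ∑ u, jv u) else 0))) *
        (X 0 ^ n * X 1 ^ (r - 1)) := by
    rw [← Finset.sum_mul, map_sum]
  rw [hC, scalar_sum r m hm c₁ hc₁ i hi, mul_assoc]
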